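/- (Sufficiency of rationality for limit cycles.) Consider the switched quantized control system with parameter α satisfying 1 < α < 3/2 and disturbance rounding error Δ_d with |Δ_d| = n/m ≤ 1/2, where n and m are coprime natural numbers with 1 ≤ n < m. If condition (9) holds at some time k, then there exists k̄ > k such that for all j ≥ k̄ one has e(j+m) = e(j) and ū(j+m) = ū(j), and in each window of m consecutive times j ∈ {k̄, …, k̄+m−1} the quantized error ρ(e(j)) equals sign(Δ_d) for exactly n indices j and equals 0 for the remaining m − n indices; that is, the system evolves on an n-periodic limit cycle of period m. -/
import Mathlib


/-- Sign function: 1 for positive, 0 for zero, -1 for negative. -/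
noncomputable def rsign (z : ℝ) : ℤ :=
  if 0 < z then 1 else if z = 0 then 0 else -1

/-- Rounding operator: rounds to the nearest integer, ties away from zero. -/
noncomputable def rho (z : ℝ) : ℤ :=
  if Int.fract |z| < 1/2 then rsign z * ⌊|z|⌋ else rsign z * (⌊|z|⌋ + 1)

/-- The switched quantized control system with parameter `α` and disturbance
rounding error `Δd`, with state trajectory `(e, u)`. -/
def Traj (α Δd : ℝ) (e u : ℕ → ℝ) : Prop :=
  ∀ k : ℕ,
    e (k+1) = e k + (rho (u k) : ℝ) + Δd ∧
    u (k+1) = if rho (e (k+1)) = 0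
      then ((rho (u k) : ℝ) + (rho (e k) : ℝ))
      else (u k + (rho (e k) : ℝ) - α * (rho (e (k+1)) : ℝ))

/-- Condition (9) at time `k`. -/
def Cond9 (α Δd : ℝ) (e u : ℕ → ℝ) (k : ℕ) : Prop :=
  (-(1/2) < e k ∧ e k < 1/2) ∧
  (1 ≤ α - u k * (rsign Δd : ℝ) ∧ α - u k * (rsign Δd : ℝ) < 3/2) ∧
  (-(1/2) < u k ∧ u k < 1/2)

lemma rho_zero {z : ℝ} (h1 : -(1/2) < z) (h2 : z < 1/2) : rho z = 0 := by
  have ha : |z| < 1/2 := abs_lt.2 ⟨by linarith, h2⟩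
  have hf : ⌊|z|⌋ = 0 := Int.floor_eq_zero_iff.2 ⟨abs_nonneg z, by linarith⟩
  have hfr : Int.fract |z| = |z| := by rw [Int.fract, hf]; push_cast; ring
  unfold rho
  rw [hfr, if_pos ha, hf, mul_zero]

lemma rho_one {z : ℝ} (h1 : 1/2 ≤ z) (h2 : z < 1) : rho z = 1 := by
  have hz : 0 < z := by linarith
  have ha : |z| = z := abs_of_pos hz
  have hf : ⌊z⌋ = 0 := Int.floor_eq_zero_iff.2 ⟨by linarith, by linarith⟩
  have hfr : Int.fract z = z := by rw [Int.fract, hf]; push_cast; ring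
  have hs : rsign z = 1 := by unfold rsign; rw [if_pos hz]
  unfold rho
  rw [ha, hfr, if_neg (by linarith), hf, hs]; ring

lemma rho_negone {z : ℝ} (h1 : -(3/2) < z) (h2 : z ≤ -1) : rho z = -1 := by
  have hz : ¬ (0 < z) := by linarith
  have hz0 : ¬ (z = 0) := by linarith
  have ha : |z| = -z := abs_of_neg (by linarith)
  have hf : ⌊(-z : ℝ)⌋ = 1 := by
    rw [Int.floor_eq_iff]
    constructor <;> push_cast <;> linarith
  have hfr : Int.fract (-z : ℝ) = -z - 1 := by rw [Int.fract, hf]; push_cast; ring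
  have hs : rsign z = -1 := by unfold rsign; rw [if_neg hz, if_neg hz0]
  unfold rho
  rw [ha, hfr, if_pos (by linarith), hf, hs]; ring

lemma rsign_neg (z : ℝ) : rsign (-z) = - rsign z := by
  unfold rsign
  rcases lt_trichotomy z 0 with h | h | h
  · rw [if_pos (by linarith), if_neg (by linarith), if_neg (by linarith)]; ring
  · simp [h]
  · rw [if_neg (by linarith), if_neg (by linarith), if_pos h]

lemma rho_neg (z : ℝ) : rho (-z) = - rho z := by
  unfold rho
  rw [abs_neg, rsign_neg]
  split_ifs <;> ring

lemma traj_neg {α Δd : ℝ} {e u : ℕ → ℝ} (h : Traj α Δd e u) :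
    Traj α (-Δd) (fun j => -(e j)) (fun j => -(u j)) := by
  intro k
  obtain ⟨he, hu⟩ := h k
  simp only [rho_neg]
  constructor
  · push_cast; linarith
  · by_cases hc : rho (e (k+1)) = 0
    · rw [if_pos (show -rho (e (k+1)) = 0 by simp [hc]), hu, if_pos hc]
      push_cast; ring
    · rw [if_neg (show ¬(-rho (e (k+1)) = 0) by simp [hc]), hu, if_neg hc]
      push_cast; ring

lemma cond9_neg {α Δd : ℝ} {e u : ℕ → ℝ} {k : ℕ} (h : Cond9 α Δd e u k) :
    Cond9 α (-Δd) (fun j => -(e j)) (fun j => -(u j)) k := by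
  obtain ⟨⟨h1, h2⟩, ⟨h3, h4⟩, ⟨h5, h6⟩⟩ := h
  refine ⟨⟨by linarith, by linarith⟩, ⟨?_, ?_⟩, ⟨by linarith, by linarith⟩⟩
  · rw [rsign_neg]; push_cast; nlinarith [h3]
  · rw [rsign_neg]; push_cast; nlinarith [h4]

set_option maxHeartbeats 2000000 in
open scoped Classical in
lemma main_pos (α Δd : ℝ) (hα1 : 1 < α) (hα2 : α < 3/2)
    (n m : ℕ) (hn : 1 ≤ n) (hm : n < m)
    (hΔpos : 0 < Δd) (hΔ : Δd = (n : ℝ) / (m : ℝ)) (hΔhalf : Δd ≤ 1/2)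
    (e u : ℕ → ℝ) (htraj : Traj α Δd e u) (k : ℕ) (h9 : Cond9 α Δd e u k) :
    ∃ kb : ℕ, k < kb ∧
      (∀ j : ℕ, kb ≤ j → e (j+m) = e j ∧ u (j+m) = u j) ∧
      (∀ t : ℕ, kb ≤ t →
        ((Finset.Ico t (t+m)).filter (fun j => rho (e j) = rsign Δd)).card = n ∧
        ((Finset.Ico t (t+m)).filter (fun j => rho (e j) = 0)).card = m - n) := by
  have hs : rsign Δd = 1 := by unfold rsign; rw [if_pos hΔpos]
  have hm0 : (0:ℝ) < (m:ℝ) := by exact_mod_cast (by omega : 0 < m)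
  have hmd : (m:ℝ) * Δd = n := by rw [hΔ]; field_simp
  -- the invariant
  set P : ℕ → Prop := fun j => Δd - 1/2 ≤ e j ∧ e j < 1/2 + Δd ∧
      (e j < 1/2 → u j = 0) ∧ (1/2 ≤ e j → u j = -α) with hPdef
  -- one-step preservation
  have hstep : ∀ j, P j → P (j+1) ∧
      e (j+1) = e j + Δd - (if 1/2 ≤ e j then (1:ℝ) else 0) := by
    intro j hPj
    obtain ⟨hj1, hj2, hj3, hj4⟩ := hPj
    obtain ⟨he, hu⟩ := htraj j
    by_cases hc : 1/2 ≤ e j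
    · have hu0 : u j = -α := hj4 hc
      have hruj : rho (u j) = -1 := by
        rw [hu0]; exact rho_negone (by linarith) (by linarith)
      have hej1 : e (j+1) = e j + Δd - 1 := by rw [he, hruj]; push_cast; ring
      have hb1 : Δd - 1/2 ≤ e (j+1) := by linarith
      have hb2 : e (j+1) < 1/2 := by linarith
      have hre1 : rho (e (j+1)) = 0 := rho_zero (by linarith) hb2
      have hrej : rho (e j) = 1 := rho_one hc (by linarith)
      have hu1 : u (j+1) = 0 := by
        rw [hu, if_pos hre1, hruj, hrej]; norm_num
      refine ⟨⟨hb1, by linarith, fun _ => hu1, fun h => absurd h (by linarith)⟩, ?_⟩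
      rw [if_pos hc]; linarith
    · push_neg at hc
      have hu0 : u j = 0 := hj3 hc
      have hruj : rho (u j) = 0 := by rw [hu0]; exact rho_zero (by norm_num) (by norm_num)
      have hej1 : e (j+1) = e j + Δd := by rw [he, hruj]; push_cast; ring
      have hrej : rho (e j) = 0 := rho_zero (by linarith) hc
      have hb1 : Δd - 1/2 ≤ e (j+1) := by linarith
      have hb2 : e (j+1) < 1/2 + Δd := by linarith
      by_cases hc2 : 1/2 ≤ e (j+1)
      · have hre1 : rho (e (j+1)) = 1 := rho_one hc2 (by linarith)
        have hu1 : u (j+1) = -α := by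
          rw [hu, if_neg (by rw [hre1]; norm_num), hrej, hre1, hu0]; push_cast; ring
        refine ⟨⟨hb1, hb2, fun h => absurd hc2 (by linarith), fun _ => hu1⟩, ?_⟩
        rw [if_neg (by linarith)]; linarith
      · push_neg at hc2
        have hre1 : rho (e (j+1)) = 0 := rho_zero (by linarith) hc2
        have hu1 : u (j+1) = 0 := by rw [hu, if_pos hre1, hruj, hrej]; norm_num
        refine ⟨⟨hb1, hb2, fun _ => hu1, fun h => absurd h (by linarith)⟩, ?_⟩
        rw [if_neg (by linarith)]; linarith
  -- unpack condition (9)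
  obtain ⟨⟨he1, he2⟩, ⟨hg1, hg2⟩, ⟨hub1, hub2⟩⟩ := h9
  rw [hs] at hg1 hg2
  push_cast at hg1 hg2
  rw [mul_one] at hg1 hg2
  -- first firing time
  have hex : ∃ i : ℕ, 1/2 ≤ e k + i * Δd := by
    obtain ⟨i, hi⟩ := exists_nat_ge ((1/2 - e k) / Δd)
    refine ⟨i, ?_⟩
    rw [div_le_iff₀ hΔpos] at hi
    linarith
  obtain ⟨i0, hi0spec, hi0min⟩ : ∃ i0 : ℕ, 1/2 ≤ e k + i0 * Δd ∧
      ∀ i, i < i0 → e k + i * Δd < 1/2 := by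
    refine ⟨Nat.find hex, Nat.find_spec hex, ?_⟩
    intro i hi
    have := Nat.find_min hex hi
    push_neg at this
    exact this
  have hi0pos : 1 ≤ i0 := by
    by_contra h
    push_neg at h
    have h0 : i0 = 0 := by omega
    rw [h0] at hi0spec
    simp at hi0spec
    linarith
  obtain ⟨i1, hi1⟩ : ∃ i1, i0 = i1 + 1 := ⟨i0 - 1, by omega⟩
  -- before the first firing
  have hA : ∀ i, i < i0 → e (k+i) = e k + i * Δd ∧ rho (u (k+i)) = 0 ∧
      1 ≤ α - u (k+i) ∧ α - u (k+i) < 3/2 := by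
    intro i
    induction i with
    | zero =>
      intro _
      refine ⟨by norm_num, ?_, ?_, ?_⟩
      · rw [Nat.add_zero]; exact rho_zero hub1 hub2
      · rw [Nat.add_zero]; exact hg1
      · rw [Nat.add_zero]; exact hg2
    | succ i ih =>
      intro hlt
      have hi : i < i0 := Nat.lt_of_succ_lt hlt
      obtain ⟨hei, hri, hb1, hb2⟩ := ih hi
      obtain ⟨he, hu⟩ := htraj (k+i)
      have hkk : k + (i+1) = (k+i) + 1 := by omega
      have hnn : (0:ℝ) ≤ (i:ℝ) := by positivity
      have hei1 : e (k+(i+1)) = e k + (i+1) * Δd := by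
        rw [hkk, he, hri, hei]; push_cast; ring
      have hlt2 : e k + ((i:ℝ)+1) * Δd < 1/2 := by
        have := hi0min (i+1) hlt
        push_cast at this
        linarith
      have hgt2 : -(1/2) < e k + ((i:ℝ)+1) * Δd := by nlinarith
      have hre1 : rho (e (k+(i+1))) = 0 := by
        rw [hei1]; push_cast; exact rho_zero hgt2 hlt2
      have hrei : rho (e (k+i)) = 0 := by
        rw [hei]; apply rho_zero
        · nlinarith
        · have := hi0min i hi; linarith
      have hu1 : u (k+(i+1)) = 0 := by
        rw [hkk] at hre1 ⊢
        rw [hu, if_pos hre1, hri, hrei]; norm_num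
      exact ⟨by rw [hei1]; push_cast; ring,
        by rw [hu1]; exact rho_zero (by norm_num) (by norm_num),
        by rw [hu1]; linarith, by rw [hu1]; linarith⟩
  -- the firing step at time k+i0 = k+i1+1
  obtain ⟨heA, hrA, hbA1, hbA2⟩ := hA i1 (by omega)
  obtain ⟨heB, huB⟩ := htraj (k+i1)
  have hnn1 : (0:ℝ) ≤ (i1:ℝ) := by positivity
  have he0 : e (k+i1+1) = e k + (i0:ℝ) * Δd := by
    rw [heB, hrA, heA, hi1]; push_cast; ring
  have hfire_lb : 1/2 ≤ e (k+i1+1) := by rw [he0]; exact hi0spec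
  have hfire_ub : e (k+i1+1) < 1/2 + Δd := by
    have := hi0min i1 (by omega)
    rw [he0, hi1]; push_cast; linarith
  have hre_fire : rho (e (k+i1+1)) = 1 := rho_one hfire_lb (by linarith)
  have hrei1 : rho (e (k+i1)) = 0 := by
    rw [heA]; apply rho_zero
    · nlinarith
    · have := hi0min i1 (by omega); linarith
  have hufire : u (k+i1+1) = u (k+i1) - α := by
    rw [huB, if_neg (by rw [hre_fire]; norm_num), hrei1, hre_fire]; push_cast; ring
  have hrufire : rho (u (k+i1+1)) = -1 := by
    rw [hufire]; exact rho_negone (by linarith) (by linarith)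
  -- settle into the invariant at kb = k+i1+2
  obtain ⟨heC, huC⟩ := htraj (k+i1+1)
  have hekb : e (k+i1+1+1) = e (k+i1+1) + Δd - 1 := by
    rw [heC, hrufire]; push_cast; ring
  have hkb1 : Δd - 1/2 ≤ e (k+i1+1+1) := by linarith
  have hkb2 : e (k+i1+1+1) < 1/2 := by linarith
  have hrekb : rho (e (k+i1+1+1)) = 0 := rho_zero (by linarith) hkb2
  have hukb : u (k+i1+1+1) = 0 := by
    rw [huC, if_pos hrekb, hrufire, hre_fire]; norm_num
  set kb := k + i1 + 1 + 1 with hkbdef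
  have hPkb : P kb := ⟨hkb1, by linarith, fun _ => hukb, fun h => absurd h (by linarith)⟩
  have hPall : ∀ j, kb ≤ j → P j := by
    intro j hj
    exact Nat.le_induction hPkb (fun j _ hPj => (hstep j hPj).1) j hj
  -- the summation formula
  have hsum : ∀ t, kb ≤ t → ∀ i, e (t+i) = e t + i * Δd -
      ∑ j ∈ Finset.Ico t (t+i), (if 1/2 ≤ e j then (1:ℝ) else 0) := by
    intro t ht i
    induction i with
    | zero => simp
    | succ i ih =>
      have hkk : t + (i+1) = (t+i) + 1 := by omega
      rw [hkk, (hstep _ (hPall (t+i) (by omega))).2,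
        Finset.sum_Ico_succ_top (by omega)]
      push_cast
      linarith [ih]
  -- periodicity and count
  have key : ∀ t, kb ≤ t → e (t+m) = e t ∧
      ((Finset.Ico t (t+m)).filter (fun j => 1/2 ≤ e j)).card = n := by
    intro t ht
    have h1 := hsum t ht m
    have hSC : ∑ j ∈ Finset.Ico t (t+m), (if 1/2 ≤ e j then (1:ℝ) else 0) =
        (((Finset.Ico t (t+m)).filter (fun j => 1/2 ≤ e j)).card : ℝ) :=
      Finset.sum_boole _ _
    set C := ((Finset.Ico t (t+m)).filter (fun j => 1/2 ≤ e j)).card with hC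
    rw [hSC] at h1
    obtain ⟨hPt1, hPt2, _, _⟩ := hPall t ht
    obtain ⟨hPm1, hPm2, _, _⟩ := hPall (t+m) (by omega)
    have hdiff : e (t+m) - e t = (n:ℝ) - (C:ℝ) := by rw [h1]; linarith [hmd]
    have h3 : C < n + 1 := by
      have : (C:ℝ) < (n:ℝ) + 1 := by linarith
      exact_mod_cast this
    have h4 : n < C + 1 := by
      have : (n:ℝ) < (C:ℝ) + 1 := by linarith
      exact_mod_cast this
    have hCn : C = n := by omega
    rw [hCn] at hdiff
    exact ⟨by linarith, hCn⟩
  refine ⟨kb, by omega, ?_, ?_⟩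
  · intro j hj
    obtain ⟨hee, _⟩ := key j hj
    refine ⟨hee, ?_⟩
    obtain ⟨_, _, hj3, hj4⟩ := hPall j hj
    obtain ⟨_, _, hm3, hm4⟩ := hPall (j+m) (by omega)
    by_cases hc : 1/2 ≤ e j
    · rw [hm4 (by rw [hee]; exact hc), hj4 hc]
    · push_neg at hc
      rw [hm3 (by rw [hee]; exact hc), hj3 hc]
  · intro t ht
    have hCn := (key t ht).2
    have hmem : ∀ j ∈ Finset.Ico t (t+m), kb ≤ j := by
      intro j hj
      have := (Finset.mem_Ico.1 hj).1
      omega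
    have hf1 : (Finset.Ico t (t+m)).filter (fun j => rho (e j) = rsign Δd) =
        (Finset.Ico t (t+m)).filter (fun j => 1/2 ≤ e j) := by
      apply Finset.filter_congr
      intro j hj
      obtain ⟨hq1, hq2, _, _⟩ := hPall j (hmem j hj)
      rw [hs]
      by_cases hc : 1/2 ≤ e j
      · simp only [rho_one hc (by linarith)]
        exact iff_of_true trivial hc
      · push_neg at hc
        simp only [rho_zero (by linarith) hc]
        exact iff_of_false (by norm_num) (not_le.2 hc)
    have hf2 : (Finset.Ico t (t+m)).filter (fun j => rho (e j) = 0) =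
        (Finset.Ico t (t+m)).filter (fun j => ¬ (1/2 ≤ e j)) := by
      apply Finset.filter_congr
      intro j hj
      obtain ⟨hq1, hq2, _, _⟩ := hPall j (hmem j hj)
      by_cases hc : 1/2 ≤ e j
      · simp only [rho_one hc (by linarith)]
        exact iff_of_false (by norm_num) (not_not_intro hc)
      · push_neg at hc
        simp only [rho_zero (by linarith) hc]
        exact iff_of_true trivial (not_le.2 hc)
    have hcards := Finset.card_filter_add_card_filter_not
      (s := Finset.Ico t (t+m)) (p := fun j => 1/2 ≤ e j)
    rw [Nat.card_Ico] at hcards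
    constructor
    · rw [hf1]; exact hCn
    · rw [hf2]; omega

open scoped Classical in
theorem stmt_4 (α Δd : ℝ) (hα : 1 < α ∧ α < 3/2)
    (n m : ℕ) (hnm : Nat.Coprime n m) (hn : 1 ≤ n) (hm : n < m)
    (hΔ : |Δd| = (n : ℝ) / (m : ℝ)) (hΔhalf : |Δd| ≤ 1/2)
    (e u : ℕ → ℝ) (htraj : Traj α Δd e u) (k : ℕ) (h9 : Cond9 α Δd e u k) :
    ∃ kb : ℕ, k < kb ∧
      (∀ j : ℕ, kb ≤ j → e (j+m) = e j ∧ u (j+m) = u j) ∧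
      (∀ t : ℕ, kb ≤ t →
        ((Finset.Ico t (t+m)).filter (fun j => rho (e j) = rsign Δd)).card = n ∧
        ((Finset.Ico t (t+m)).filter (fun j => rho (e j) = 0)).card = m - n) := by
  have hnR : (0:ℝ) < (n:ℝ) := by exact_mod_cast hn
  have hmR : (0:ℝ) < (m:ℝ) := by exact_mod_cast (by omega : 0 < m)
  have hq : (0:ℝ) < (n:ℝ) / (m:ℝ) := by positivity
  rcases lt_trichotomy Δd 0 with hneg | h0 | hpos
  · -- negative disturbance : use the symmetry
    have habs : |Δd| = -Δd := abs_of_neg hneg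
    rw [habs] at hΔ hΔhalf
    obtain ⟨kb, hk, hper, hcount⟩ := main_pos α (-Δd) hα.1 hα.2 n m hn hm
      (by linarith) hΔ hΔhalf _ _ (traj_neg htraj) k (cond9_neg h9)
    refine ⟨kb, hk, ?_, ?_⟩
    · intro j hj
      obtain ⟨h1, h2⟩ := hper j hj
      simp only [neg_inj] at h1 h2
      exact ⟨h1, h2⟩
    · intro t ht
      obtain ⟨h1, h2⟩ := hcount t ht
      constructor
      · rw [← h1]
        congr 1
        apply Finset.filter_congr
        intro j _
        simp only [rho_neg, rsign_neg, neg_inj]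
      · rw [← h2]
        congr 1
        apply Finset.filter_congr
        intro j _
        simp only [rho_neg, neg_eq_zero]
  · rw [h0, abs_zero] at hΔ
    linarith
  · have habs : |Δd| = Δd := abs_of_pos hpos
    rw [habs] at hΔ hΔhalf
    exact main_pos α Δd hα.1 hα.2 n m hn hm hpos hΔ hΔhalf e u htraj k h9
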